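/- For every n ≥ 1, the polynomial identity Q_n(x, y, z, t) = Q_n(x + n·z + n·t, y, −t, −z) holds, where the right-hand side denotes the result of substituting x + n·z + n·t for x, −t for z, and −z for t in Q_n. -/

import Mathlib

open MvPolynomial

/-- The Chapoton polynomials `Q n`, defined by `Q 1 = 1` and
`Q (n+1) = [x + n z + (y + t)(n + y ∂_y)] Q n`, where the variables
`x, y, z, t` are `X 0, X 1, X 2, X 3` respectively. -/
noncomputable def ChapotonQ : ℕ → MvPolynomial (Fin 4) ℤ
  | 0 => 1
  | 1 => 1
  | (n + 2) =>
      (X 0 + ((n : MvPolynomial (Fin 4) ℤ) + 1) * X 2) * ChapotonQ (n + 1) +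
        (X 1 + X 3) * (((n : MvPolynomial (Fin 4) ℤ) + 1) * ChapotonQ (n + 1) +
          X 1 * pderiv 1 (ChapotonQ (n + 1)))


noncomputable abbrev PP := MvPolynomial (Fin 4) ℤ

noncomputable def vT : Fin 4 → PP := ![X 0 + X 2 + X 3, X 1, X 2, X 3]
noncomputable def vS (m : ℕ) : Fin 4 → PP :=
  ![X 0 + (m : PP) * X 2 + (m : PP) * X 3, X 1, -X 3, -X 2]

lemma pderiv_aeval_comm (f : Fin 4 → PP) (hf1 : pderiv 1 (f 1) = 1)
    (hf : ∀ i, i ≠ 1 → pderiv 1 (f i) = 0) (p : PP) :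
    pderiv 1 (aeval f p) = aeval f (pderiv 1 p) := by
  induction p using MvPolynomial.induction_on with
  | C a => rw [aeval_C, pderiv_C, map_zero, algebraMap_eq, pderiv_C]
  | add p q hp hq => simp only [map_add, hp, hq]
  | mul_X p i hp =>
    simp only [map_mul, aeval_X, pderiv_mul, hp, map_add]
    by_cases h : i = 1
    · subst h
      rw [hf1, pderiv_X_self]
      simp only [map_one, mul_one]
    · rw [hf i h, pderiv_X_of_ne (by exact_mod_cast h), map_zero, mul_zero]

lemma pderiv_T (p : PP) : pderiv 1 (aeval vT p) = aeval vT (pderiv 1 p) := by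
  refine pderiv_aeval_comm _ (by simp [vT]) (fun i hi => ?_) p
  fin_cases i <;> simp_all [vT, pderiv_X_of_ne]

lemma pderiv_S (m : ℕ) (p : PP) :
    pderiv 1 (aeval (vS m) p) = aeval (vS m) (pderiv 1 p) := by
  refine pderiv_aeval_comm _ (by simp [vS]) (fun i hi => ?_) p
  fin_cases i <;> simp_all [vS, pderiv_X_of_ne]

lemma SS_comp (m : ℕ) (p : PP) :
    aeval (vS (m + 1)) (aeval (vS m) p) = aeval vT p := by
  have h : ∀ i, aeval (vS (m + 1)) (vS m i) = vT i := by
    intro i; fin_cases i <;> simp [vS, vT] <;> push_cast <;> ring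
  rw [← AlgHom.comp_apply, comp_aeval, funext h]

/-- Duality formula: `Q_n(x,y,z,t) = Q_n(x + n z + n t, y, -t, -z)`. -/
lemma aT0 : aeval vT (X 0 : PP) = X 0 + X 2 + X 3 := by simp [vT]
lemma aT1 : aeval vT (X 1 : PP) = X 1 := by simp [vT]
lemma aT2 : aeval vT (X 2 : PP) = X 2 := by simp [vT]
lemma aT3 : aeval vT (X 3 : PP) = X 3 := by simp [vT]

set_option maxHeartbeats 2000000 in
lemma chapoton_key (n : ℕ) :
    aeval vT (ChapotonQ (n + 1)) - ChapotonQ (n + 1) =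
      (X 2 + X 3) * ((n : PP) * aeval vT (ChapotonQ n)
        + X 1 * pderiv 1 (aeval vT (ChapotonQ n))) := by
  induction n with
  | zero => simp [ChapotonQ]
  | succ n ih =>
    obtain _ | m := n
    · -- n = 1 : Q 2 = (x + z) + (y + t)
      have h2 : ChapotonQ 2 = X 0 + X 2 + (X 1 + X 3) := by
        simp only [ChapotonQ, Nat.cast_zero, zero_add, one_mul, mul_one,
          Derivation.map_one_eq_zero, mul_zero, add_zero]
      have h1 : ChapotonQ 1 = 1 := rfl
      show aeval vT (ChapotonQ 2) - ChapotonQ 2 =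
        (X 2 + X 3) * (((1 : ℕ) : PP) * aeval vT (ChapotonQ 1) + X 1 * pderiv 1 (aeval vT (ChapotonQ 1)))
      rw [h2, h1]
      simp only [map_add, map_mul, map_one, aT0, aT1, aT2, aT3, Nat.cast_one,
        Derivation.map_one_eq_zero, mul_zero, add_zero, one_mul]
      ring
    · -- n = m + 2
      simp only [show m + 1 + 1 = m + 2 from rfl, show m + 2 + 1 = m + 3 from rfl] at ih ⊢
      push_cast at ih ⊢
      set R := aeval vT (ChapotonQ (m + 1)) with hRdef
      have hrecB : ChapotonQ (m + 2) = (X 0 + ((m : PP) + 1) * X 2) * ChapotonQ (m + 1) +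
          (X 1 + X 3) * (((m : PP) + 1) * ChapotonQ (m + 1)
            + X 1 * pderiv 1 (ChapotonQ (m + 1))) := rfl
      have hTB : aeval vT (ChapotonQ (m + 2)) =
          (X 0 + X 2 + X 3 + ((m : PP) + 1) * X 2) * R +
          (X 1 + X 3) * (((m : PP) + 1) * R + X 1 * pderiv 1 R) := by
        rw [hrecB]
        simp only [map_add, map_mul, map_one, map_natCast, aT0, aT1, aT2, aT3, ← pderiv_T]
        rfl
      have hB : ChapotonQ (m + 2) =
          (X 0 + X 2 + X 3 + ((m : PP) + 1) * X 2) * R +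
            (X 1 + X 3) * (((m : PP) + 1) * R + X 1 * pderiv 1 R) -
          (X 2 + X 3) * (((m : PP) + 1) * R + X 1 * pderiv 1 R) := by
        linear_combination hTB - ih
      have hrec3 : ChapotonQ (m + 3) =
          (X 0 + (((m + 1 : ℕ) : PP) + 1) * X 2) * ChapotonQ (m + 2) +
          (X 1 + X 3) * ((((m + 1 : ℕ) : PP) + 1) * ChapotonQ (m + 2)
            + X 1 * pderiv 1 (ChapotonQ (m + 2))) := rfl
      have hT3' : aeval vT (ChapotonQ (m + 3)) =
          (X 0 + X 2 + X 3 + (((m + 1 : ℕ) : PP) + 1) * X 2) * aeval vT (ChapotonQ (m + 2)) +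
          (X 1 + X 3) * ((((m + 1 : ℕ) : PP) + 1) * aeval vT (ChapotonQ (m + 2))
            + X 1 * pderiv 1 (aeval vT (ChapotonQ (m + 2)))) := by
        rw [hrec3]
        simp only [map_add, map_mul, map_one, map_natCast, aT0, aT1, aT2, aT3, ← pderiv_T]
      push_cast at hrec3 hT3'
      rw [hT3', hrec3, hTB, hB]
      simp only [map_add, map_sub, pderiv_mul, pderiv_X_self, Derivation.map_natCast,
        Derivation.map_one_eq_zero, mul_zero, zero_mul, add_zero,
        pderiv_X_of_ne (show (2 : Fin 4) ≠ 1 by decide),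
        pderiv_X_of_ne (show (3 : Fin 4) ≠ 1 by decide),
        pderiv_X_of_ne (show (0 : Fin 4) ≠ 1 by decide)]
      ring

set_option maxHeartbeats 2000000 in
lemma chapoton_aux (n : ℕ) :
    ChapotonQ (n + 1) = aeval (vS (n + 1)) (ChapotonQ (n + 1)) := by
  induction n with
  | zero =>
    show (1 : PP) = aeval (vS 1) 1
    rw [map_one]
  | succ n ih =>
    have hrec : ChapotonQ (n + 2) = (X 0 + ((n : PP) + 1) * X 2) * ChapotonQ (n + 1) +
        (X 1 + X 3) * (((n : PP) + 1) * ChapotonQ (n + 1)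
          + X 1 * pderiv 1 (ChapotonQ (n + 1))) := rfl
    have hσA : aeval (vS (n + 2)) (ChapotonQ (n + 1)) = aeval vT (ChapotonQ (n + 1)) := by
      conv_lhs => rw [ih]
      exact SS_comp (n + 1) _
    have s0 : aeval (vS (n + 2)) (X 0 : PP)
        = X 0 + ((n + 2 : ℕ) : PP) * X 2 + ((n + 2 : ℕ) : PP) * X 3 := by simp [vS]
    have s1 : aeval (vS (n + 2)) (X 1 : PP) = X 1 := by simp [vS]
    have s2 : aeval (vS (n + 2)) (X 2 : PP) = -X 3 := by simp [vS]
    have s3 : aeval (vS (n + 2)) (X 3 : PP) = -X 2 := by simp [vS]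
    have key := chapoton_key (n + 1)
    have hT : aeval vT (ChapotonQ (n + 2)) =
        (X 0 + X 2 + X 3 + ((n : PP) + 1) * X 2) * aeval vT (ChapotonQ (n + 1)) +
        (X 1 + X 3) * (((n : PP) + 1) * aeval vT (ChapotonQ (n + 1))
          + X 1 * pderiv 1 (aeval vT (ChapotonQ (n + 1)))) := by
      rw [hrec]
      simp only [map_add, map_mul, map_one, map_natCast, aT0, aT1, aT2, aT3, ← pderiv_T]
    conv_rhs => rw [hrec]
    simp only [map_add, map_mul, map_one, map_natCast, s0, s1, s2, s3, ← pderiv_S, hσA]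
    push_cast at key hT ⊢
    linear_combination hT - key

theorem chapotonQ_duality (n : ℕ) (hn : 1 ≤ n) :
    ChapotonQ n =
      aeval ![X 0 + (n : MvPolynomial (Fin 4) ℤ) * X 2 + (n : MvPolynomial (Fin 4) ℤ) * X 3,
        X 1, -X 3, -X 2] (ChapotonQ n) := by
  obtain ⟨m, rfl⟩ : ∃ m, n = m + 1 := ⟨n - 1, by omega⟩
  show ChapotonQ (m + 1) = aeval (vS (m + 1)) (ChapotonQ (m + 1))
  exact chapoton_aux m
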